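/- Let s ≥ 1, ℓ ≥ s−1 and τ be such that N_t = s(n−τ)−t(k−1) > 0 for t ∈ {0,…,ℓ}, and let Q(x,y) = Σ_{t=0}^{ℓ} Q^(t)(x)·y^t with deg Q^(t) < N_t for all t (equivalently wdeg_{1,k−1} Q < s(n−τ)). Then Q has multiplicity at least s at (α_i, r_i/υ'_i) for every i ∈ {1,…,n} if and only if there exist polynomials B^(0),…,B^(s−1) ∈ F[x] with deg B^(b) < ℓ(n−k)−sτ+b such that Q^{[b]}(x, R(x)) = B^(b)(x)·G(x)^{s−b} for every b ∈ {0,…,s−1}. -/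

import Mathlib

open Polynomial

private lemma gsA {S : Type*} [CommRing S] (f : S[X]) (b : ℕ) (c e : S) :
    (f.hasseDeriv b).eval c =
      ∑ m ∈ Finset.range ((f.hasseDeriv b).natDegree + 1),
        ((m + b).choose m : S) * ((f.hasseDeriv (m + b)).eval e) * (c - e) ^ m := by
  have h1 : (f.hasseDeriv b).eval c = (taylor e (f.hasseDeriv b)).eval (c - e) := by
    rw [taylor_eval, sub_add_cancel]
  rw [h1, eval_eq_sum_range, natDegree_taylor]
  refine Finset.sum_congr rfl fun m _ => ?_
  rw [taylor_coeff]
  have h2 : (f.hasseDeriv b).hasseDeriv m = (m + b).choose m • f.hasseDeriv (m + b) := by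
    have := congrFun (congrArg DFunLike.coe (hasseDeriv_comp m b (R := S))) f
    simpa using this
  rw [h2]
  simp [nsmul_eq_mul, mul_assoc]

private lemma gsB {S : Type*} [CommRing S] (f : S[X]) (s : ℕ) (π c e : S)
    (hce : π ∣ c - e) (h : ∀ j < s, π ^ (s - j) ∣ (f.hasseDeriv j).eval e)
    {b : ℕ} (hb : b < s) : π ^ (s - b) ∣ (f.hasseDeriv b).eval c := by
  rw [gsA f b c e]
  refine Finset.dvd_sum fun m _ => ?_
  rcases lt_or_ge (m + b) s with hmb | hmb
  · have h1 : π ^ (s - (m + b)) ∣ (f.hasseDeriv (m + b)).eval e := h _ hmb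
    have h2 : π ^ m ∣ (c - e) ^ m := pow_dvd_pow_of_dvd hce m
    have h3 : π ^ (s - b) = π ^ (s - (m + b)) * π ^ m := by
      rw [← pow_add]; congr 1; omega
    rw [h3, mul_assoc]
    exact Dvd.dvd.mul_left (mul_dvd_mul h1 h2) _
  · have h2 : π ^ (s - b) ∣ (c - e) ^ m :=
      dvd_trans (pow_dvd_pow π (by omega)) (pow_dvd_pow_of_dvd hce m)
    exact Dvd.dvd.mul_left h2 _

private lemma gsC {F : Type*} [CommRing F] (a : F) (E : F[X]) (m : ℕ) :
    X ^ m ∣ (aeval (X + C a) : F[X] →ₐ[F] F[X]) E ↔ (X - C a) ^ m ∣ E := by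
  constructor
  · rintro ⟨D, hD⟩
    refine ⟨(aeval (X - C a) : F[X] →ₐ[F] F[X]) D, ?_⟩
    have := congrArg (aeval (X - C a) : F[X] →ₐ[F] F[X]) hD
    simp only [← comp_eq_aeval, comp_assoc] at this ⊢
    simpa [mul_comp, pow_comp, X_comp, add_comp, sub_comp, C_comp, comp_X] using this
  · rintro ⟨D, hD⟩
    refine ⟨(aeval (X + C a) : F[X] →ₐ[F] F[X]) D, ?_⟩
    have := congrArg (aeval (X + C a) : F[X] →ₐ[F] F[X]) hD
    simp only [← comp_eq_aeval, comp_assoc] at this ⊢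
    simpa [mul_comp, pow_comp, X_comp, add_comp, sub_comp, C_comp, comp_X] using this

private lemma gsStep1 (F : Type*) [Field F] (s : ℕ) (a β : F) (Q : Polynomial (Polynomial F)) :
    (∀ i j : ℕ, i + j < s →
        ((((Q.comp (X + C (C β))).map
            ((aeval (X + C a : F[X])).toRingHom)).coeff j).coeff i = 0)) ↔
      ∀ j < s, (X - C a) ^ (s - j) ∣ (Q.hasseDeriv j).eval (C β) := by
  have hcoeff : ∀ j, ((Q.comp (X + C (C β))).map ((aeval (X + C a : F[X])).toRingHom)).coeff j
      = (aeval (X + C a : F[X]) : F[X] →ₐ[F] F[X]) ((Q.hasseDeriv j).eval (C β)) := by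
    intro j
    rw [coeff_map, ← taylor_apply, taylor_coeff]
    rfl
  constructor
  · intro h j hj
    rw [← gsC a, X_pow_dvd_iff]
    intro i hi
    rw [← hcoeff]
    exact h i j (by omega)
  · intro h i j hij
    rw [hcoeff]
    exact X_pow_dvd_iff.mp ((gsC a _ _).mpr (h j (by omega))) i (by omega)

private lemma gsDeg (F : Type*) [Field F] (n k s ℓ τ : ℕ) (hk : 1 ≤ k) (hkn : k ≤ n)
    (hτn : τ < n)
    (R : F[X]) (hRdeg : R.degree < (n : ℕ))
    (hN : ∀ t ≤ ℓ, 0 < s * (n - τ) - t * (k - 1))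
    (Q : Polynomial (Polynomial F)) (hQℓ : Q.degree ≤ (ℓ : ℕ))
    (hQd : ∀ t ≤ ℓ, (Q.coeff t).degree < ((s * (n - τ) - t * (k - 1) : ℕ) : WithBot ℕ))
    (b : ℕ) (hb : b < s) :
    ((Q.hasseDeriv b).eval R).degree
      < (((ℓ * (n - k) + b - s * τ) + (s - b) * n : ℕ) : WithBot ℕ) := by
  have hbot : (⊥ : WithBot ℕ) < (((ℓ * (n - k) + b - s * τ) + (s - b) * n : ℕ) : WithBot ℕ) :=
    WithBot.bot_lt_coe _
  rw [eval_eq_sum_range]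
  refine lt_of_le_of_lt (degree_sum_le _ _) ?_
  rw [Finset.sup_lt_iff hbot]
  intro m _
  rcases eq_or_ne ((Q.hasseDeriv b).coeff m * R ^ m) 0 with h0 | h0
  · rw [h0, degree_zero]; exact hbot
  have hc0 : (Q.hasseDeriv b).coeff m ≠ 0 := fun h => h0 (by rw [h, zero_mul])
  have hQc : Q.coeff (m + b) ≠ 0 := by
    intro hz
    apply hc0
    rw [hasseDeriv_coeff, hz, mul_zero]
  have htℓ : m + b ≤ ℓ := by
    have h1 : (m + b : ℕ) ≤ Q.natDegree := le_natDegree_of_ne_zero hQc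
    have h2 : Q.natDegree ≤ ℓ := natDegree_le_iff_degree_le.mpr hQℓ
    omega
  have hdQc : (Q.coeff (m + b)).natDegree < s * (n - τ) - (m + b) * (k - 1) :=
    (natDegree_lt_iff_degree_lt hQc).mpr (hQd _ htℓ)
  have hc : ((Q.hasseDeriv b).coeff m).natDegree ≤ (Q.coeff (m + b)).natDegree := by
    rw [hasseDeriv_coeff]
    refine le_trans (natDegree_mul_le) ?_
    simp [natDegree_natCast]
  have hR' : R.natDegree ≤ n - 1 := by
    rcases eq_or_ne R 0 with h | h
    · simp [h]
    have := (natDegree_lt_iff_degree_lt h).mpr hRdeg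
    omega
  have hnd : ((Q.hasseDeriv b).coeff m * R ^ m).natDegree
      ≤ (s * (n - τ) - (m + b) * (k - 1) - 1) + m * (n - 1) := by
    refine le_trans natDegree_mul_le ?_
    have : (R ^ m).natDegree ≤ m * (n - 1) := by
      refine le_trans (natDegree_pow_le) ?_
      exact Nat.mul_le_mul_left m hR'
    omega
  have key : (s * (n - τ) - (m + b) * (k - 1) - 1) + m * (n - 1)
      < (ℓ * (n - k) + b - s * τ) + (s - b) * n := by
    have hNt : (m + b) * (k - 1) < s * (n - τ) := by
      have := hN (m + b) htℓ; omega
    have goal3 : s * (n - τ) + m * (n - 1) + s * τ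
        ≤ ℓ * (n - k) + b + (s - b) * n + (m + b) * (k - 1) := by
      have h1 : (0:ℤ) ≤ (n:ℤ) - k := by omega
      have h2 : ((m:ℤ)) ≤ (ℓ:ℤ) - b := by omega
      have h3 := mul_le_mul_of_nonneg_right h2 h1
      zify [hτn.le, hkn, hb.le, hk, (show 1 ≤ n by omega)]
      nlinarith [h3]
    omega
  calc ((Q.hasseDeriv b).coeff m * R ^ m).degree
      = (((Q.hasseDeriv b).coeff m * R ^ m).natDegree : WithBot ℕ) := degree_eq_natDegree h0
    _ < _ := by exact_mod_cast lt_of_le_of_lt hnd key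

/-- Univariate reformulation of the Guruswami–Sudan interpolation conditions
(multiplicity `s`, decoding radius `τ`, list size `ℓ`): a bivariate polynomial
`Q(x,y) = Σ_{t≤ℓ} Q^(t)(x)·y^t` (encoded in `F[x][y]`) with `deg Q^(t) < N_t`,
`N_t = s(n−τ)−t(k−1)`, has multiplicity at least `s` at every point
`(α_i, r_i/υ'_i)` iff there exist polynomials `B^(b)` with
`deg B^(b) < ℓ(n−k)−sτ+b` such that `Q^{[b]}(x,R(x)) = B^(b)(x)·G(x)^{s−b}`
for every `b ∈ {0,…,s−1}`. -/
theorem guruswami_sudan_univariate_reformulation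
    (F : Type*) [Field F] (n k s ℓ τ : ℕ) (hk : 1 ≤ k) (hkn : k ≤ n)
    (hs : 1 ≤ s) (hsℓ : s - 1 ≤ ℓ)
    (α υ' : Fin n → F) (hα : Function.Injective α) (hα0 : ∀ i, α i ≠ 0)
    (hυ' : ∀ i, υ' i ≠ 0)
    (r : Fin n → F)
    (G : F[X]) (hG : G = ∏ i, (X - C (α i)))
    (R : F[X]) (hRdeg : R.degree < (n : ℕ))
    (hR : ∀ i, R.eval (α i) = r i / υ' i)
    (hN : ∀ t ≤ ℓ, 0 < s * (n - τ) - t * (k - 1))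
    (Q : Polynomial (Polynomial F)) (hQℓ : Q.degree ≤ (ℓ : ℕ))
    (hQd : ∀ t ≤ ℓ, (Q.coeff t).degree < ((s * (n - τ) - t * (k - 1) : ℕ) : WithBot ℕ)) :
    (∀ p : Fin n, ∀ i j : ℕ, i + j < s →
        ((((Q.comp (X + C (C (r p / υ' p)))).map
            ((aeval (X + C (α p) : F[X])).toRingHom)).coeff j).coeff i = 0)) ↔
      (∃ B : ℕ → F[X], ∀ b < s,
        (B b).degree < ((ℓ * (n - k) + b - s * τ : ℕ) : WithBot ℕ) ∧
          (Q.hasseDeriv b).eval R = B b * G ^ (s - b)) := by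
  have hτn : τ < n := by
    have h0 := hN 0 (Nat.zero_le _)
    rcases Nat.lt_or_ge τ n with h | h
    · exact h
    · exfalso
      rw [Nat.sub_eq_zero_of_le h] at h0
      simp at h0
  have hmonG : G.Monic := by
    rw [hG]
    exact monic_prod_of_monic _ _ fun i _ => monic_X_sub_C _
  have hdegG : G.natDegree = n := by
    rw [hG, natDegree_prod _ _ (fun i _ => X_sub_C_ne_zero _)]
    simp
  have hdvdR : ∀ p : Fin n, (X - C (α p)) ∣ R - C (r p / υ' p) := by
    intro p
    rw [dvd_iff_isRoot]
    simp [IsRoot, hR p]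
  constructor
  · intro h
    -- divisibility of A b by G^(s-b)
    have hdvd : ∀ b < s, G ^ (s - b) ∣ (Q.hasseDeriv b).eval R := by
      intro b hb
      rw [hG, ← Finset.prod_pow]
      refine Finset.prod_dvd_of_coprime ?_ ?_
      · exact (pairwise_coprime_X_sub_C hα).mono
          (fun i j hij => hij.pow) |>.set_pairwise _
      · intro p _
        exact gsB Q s _ R (C (r p / υ' p)) (hdvdR p)
          ((gsStep1 F s (α p) (r p / υ' p) Q).mp (h p)) hb
    refine ⟨fun b => (Q.hasseDeriv b).eval R /ₘ G ^ (s - b), fun b hb => ?_⟩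
    have hmon : (G ^ (s - b)).Monic := hmonG.pow _
    have heq : (Q.hasseDeriv b).eval R
        = ((Q.hasseDeriv b).eval R /ₘ G ^ (s - b)) * G ^ (s - b) := by
      have hmd := modByMonic_add_div ((Q.hasseDeriv b).eval R) (G ^ (s - b))
      rw [(modByMonic_eq_zero_iff_dvd hmon).mpr (hdvd b hb), zero_add] at hmd
      exact hmd.symm.trans (mul_comm _ _)
    refine ⟨?_, heq⟩
    beta_reduce
    set B := (Q.hasseDeriv b).eval R /ₘ G ^ (s - b) with hBdef
    rcases eq_or_ne B 0 with hB0 | hB0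
    · rw [hB0, degree_zero]
      exact WithBot.bot_lt_coe _
    have hA0 : (Q.hasseDeriv b).eval R ≠ 0 := by
      rw [heq]
      exact mul_ne_zero hB0 hmon.ne_zero
    have hdegA := gsDeg F n k s ℓ τ hk hkn hτn R hRdeg hN Q hQℓ hQd b hb
    have hndA : ((Q.hasseDeriv b).eval R).natDegree
        < (ℓ * (n - k) + b - s * τ) + (s - b) * n :=
      (natDegree_lt_iff_degree_lt hA0).mpr hdegA
    have hndB : ((Q.hasseDeriv b).eval R).natDegree = B.natDegree + (s - b) * n := by
      rw [heq, natDegree_mul hB0 hmon.ne_zero, natDegree_pow, hdegG]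
    rw [← natDegree_lt_iff_degree_lt hB0]
    omega
  · rintro ⟨B, hB⟩ p i j hij
    refine (gsStep1 F s (α p) (r p / υ' p) Q).mpr ?_ i j hij
    intro b hb
    refine gsB Q s _ (C (r p / υ' p)) R ?_ ?_ hb
    · exact dvd_sub_comm.mp (hdvdR p)
    · intro j' hj'
      rw [(hB j' hj').2]
      have hπ : (X - C (α p)) ∣ G := by
        rw [hG]
        exact Finset.dvd_prod_of_mem _ (Finset.mem_univ p)
      exact Dvd.dvd.mul_left (pow_dvd_pow_of_dvd hπ _) _
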